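/- Let a, b, c, d be real numbers with a < b and c < d such that 0 ∉ [a,b] and 0 ∉ [c,d]. Let f : [a,b] × [c,d] → ℝ satisfy: (1) for each fixed y₀ ∈ [c,d], the function x ↦ f(x,y₀) is continuous on [a,b] and differentiable on (a,b); (2) for each fixed x₀ ∈ (a,b), the function y ↦ f_x(x₀,y) is continuous on [c,d] and differentiable on (c,d); assume moreover that f is twice differentiable in the sense that the mixed partials needed below exist and satisfy f_{xy} = f_{yx} on (a,b) × (c,d). Then for all x₁, x₂ ∈ (a,b) with x₁ < x₂ and all y₁, y₂ ∈ (c,d) with y₁ < y₂, there exists (ξ₁, ξ₂) ∈ [x₁,x₂] × [y₁,y₂] such that ξ₁·ξ₂·f_{xy}(ξ₁,ξ₂) − ξ₁·f_x(ξ₁,ξ₂) − ξ₂·f_y(ξ₁,ξ₂) + f(ξ₁,ξ₂) = (x₂·y₂·f(x₁,y₁) − x₂·y₁·f(x₁,y₂) − x₁·y₂·f(x₂,y₁) + x₁·y₁·f(x₂,y₂)) / ((x₂ − x₁)·(y₂ − y₁)). -/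

import Mathlib

lemma pompeiu_aux_inv_mem_Icc {p q u : ℝ} (hp : p ≠ 0) (hq : q ≠ 0)
    (hpq : 0 < p * q) (hu : u ∈ Set.Icc q⁻¹ p⁻¹) : u ≠ 0 ∧ u⁻¹ ∈ Set.Icc p q := by
  rcases mul_pos_iff.mp hpq with ⟨hp0, hq0⟩ | ⟨hp0, hq0⟩
  · have hu0 : 0 < u := lt_of_lt_of_le (inv_pos.mpr hq0) hu.1
    have h1 := mul_inv_cancel₀ (ne_of_gt hu0)
    have h2 := mul_inv_cancel₀ hp
    have h3 := mul_inv_cancel₀ hq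
    refine ⟨ne_of_gt hu0, ?_, ?_⟩
    · nlinarith [hu.2, mul_pos hp0 hu0, inv_pos.mpr hu0]
    · nlinarith [hu.1, mul_pos hq0 hu0, inv_pos.mpr hu0]
  · have hu0 : u < 0 := lt_of_le_of_lt hu.2 (inv_neg''.mpr hp0)
    have h1 := mul_inv_cancel₀ (ne_of_lt hu0)
    have h2 := mul_inv_cancel₀ hp
    have h3 := mul_inv_cancel₀ hq
    refine ⟨ne_of_lt hu0, ?_, ?_⟩
    · nlinarith [hu.2, inv_neg''.mpr hu0]
    · nlinarith [hu.1, inv_neg''.mpr hu0]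

lemma pompeiu_aux_inv_mem_Ioo {p q u : ℝ} (hp : p ≠ 0) (hq : q ≠ 0)
    (hpq : 0 < p * q) (hu : u ∈ Set.Ioo q⁻¹ p⁻¹) : u ≠ 0 ∧ u⁻¹ ∈ Set.Ioo p q := by
  rcases mul_pos_iff.mp hpq with ⟨hp0, hq0⟩ | ⟨hp0, hq0⟩
  · have hu0 : 0 < u := lt_trans (inv_pos.mpr hq0) hu.1
    have h1 := mul_inv_cancel₀ (ne_of_gt hu0)
    have h2 := mul_inv_cancel₀ hp
    have h3 := mul_inv_cancel₀ hq
    refine ⟨ne_of_gt hu0, ?_, ?_⟩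
    · nlinarith [hu.2, mul_pos hp0 hu0, inv_pos.mpr hu0]
    · nlinarith [hu.1, mul_pos hq0 hu0, inv_pos.mpr hu0]
  · have hu0 : u < 0 := lt_trans hu.2 (inv_neg''.mpr hp0)
    have h1 := mul_inv_cancel₀ (ne_of_lt hu0)
    have h2 := mul_inv_cancel₀ hp
    have h3 := mul_inv_cancel₀ hq
    refine ⟨ne_of_lt hu0, ?_, ?_⟩
    · nlinarith [hu.2, inv_neg''.mpr hu0]
    · nlinarith [hu.1, inv_neg''.mpr hu0]

lemma pompeiu_aux_inv_lt {p q : ℝ} (hp : p ≠ 0) (hq : q ≠ 0) (hpq : 0 < p * q)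
    (h : p < q) : q⁻¹ < p⁻¹ := by
  have : p⁻¹ - q⁻¹ = (q - p) / (p * q) := by field_simp
  have h2 : 0 < (q - p) / (p * q) := div_pos (by linarith) hpq
  linarith [this ▸ h2]

/-- Pompeiu's Mean Value Theorem for functions of two variables. -/
theorem pompeiu_mean_value_theorem_two_dim (a b c d : ℝ) (hab : a < b) (hcd : c < d)
    (h0ab : (0 : ℝ) ∉ Set.Icc a b) (h0cd : (0 : ℝ) ∉ Set.Icc c d)
    (f fx fy fxy : ℝ → ℝ → ℝ)
    (hcont : ∀ y₀ ∈ Set.Icc c d, ContinuousOn (fun x => f x y₀) (Set.Icc a b))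
    (hfx : ∀ x ∈ Set.Ioo a b, ∀ y ∈ Set.Icc c d,
      HasDerivAt (fun t => f t y) (fx x y) x)
    (hfxcont : ∀ x₀ ∈ Set.Ioo a b, ContinuousOn (fun y => fx x₀ y) (Set.Icc c d))
    (hfxy : ∀ x ∈ Set.Ioo a b, ∀ y ∈ Set.Ioo c d,
      HasDerivAt (fun s => fx x s) (fxy x y) y)
    (hfy : ∀ x ∈ Set.Ioo a b, ∀ y ∈ Set.Ioo c d,
      HasDerivAt (fun s => f x s) (fy x y) y)
    (hsymm : ∀ x ∈ Set.Ioo a b, ∀ y ∈ Set.Ioo c d,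
      HasDerivAt (fun t => fy t y) (fxy x y) x) :
    ∀ x₁ ∈ Set.Ioo a b, ∀ x₂ ∈ Set.Ioo a b, x₁ < x₂ →
      ∀ y₁ ∈ Set.Ioo c d, ∀ y₂ ∈ Set.Ioo c d, y₁ < y₂ →
        ∃ ξ₁ ∈ Set.Icc x₁ x₂, ∃ ξ₂ ∈ Set.Icc y₁ y₂,
          ξ₁ * ξ₂ * fxy ξ₁ ξ₂ - ξ₁ * fx ξ₁ ξ₂ - ξ₂ * fy ξ₁ ξ₂ + f ξ₁ ξ₂ =
            (x₂ * y₂ * f x₁ y₁ - x₂ * y₁ * f x₁ y₂ - x₁ * y₂ * f x₂ y₁ +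
              x₁ * y₁ * f x₂ y₂) / ((x₂ - x₁) * (y₂ - y₁)) := by
  intro x₁ hx₁ x₂ hx₂ hx12 y₁ hy₁ y₂ hy₂ hy12
  -- nonvanishing facts
  have hne : ∀ x ∈ Set.Icc a b, x ≠ 0 := by
    intro x hx hx0; exact h0ab (hx0 ▸ hx)
  have hne' : ∀ y ∈ Set.Icc c d, y ≠ 0 := by
    intro y hy hy0; exact h0cd (hy0 ▸ hy)
  have hx₁0 : x₁ ≠ 0 := hne x₁ (Set.mem_Icc_of_Ioo hx₁)
  have hx₂0 : x₂ ≠ 0 := hne x₂ (Set.mem_Icc_of_Ioo hx₂)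
  have hy₁0 : y₁ ≠ 0 := hne' y₁ (Set.mem_Icc_of_Ioo hy₁)
  have hy₂0 : y₂ ≠ 0 := hne' y₂ (Set.mem_Icc_of_Ioo hy₂)
  -- same sign
  have hab' : 0 < a ∨ b < 0 := by
    by_contra hc
    push_neg at hc
    exact h0ab (Set.mem_Icc.mpr ⟨hc.1, hc.2⟩)
  have hcd' : 0 < c ∨ d < 0 := by
    by_contra hc
    push_neg at hc
    exact h0cd (Set.mem_Icc.mpr ⟨hc.1, hc.2⟩)
  have hxpos : 0 < x₁ * x₂ := by
    rcases hab' with h | h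
    · have := hx₁.1; have := hx₂.1; nlinarith
    · have := hx₁.2; have := hx₂.2; nlinarith
  have hypos : 0 < y₁ * y₂ := by
    rcases hcd' with h | h
    · have := hy₁.1; have := hy₂.1; nlinarith
    · have := hy₁.2; have := hy₂.2; nlinarith
  set t₁ := x₂⁻¹ with ht₁
  set t₂ := x₁⁻¹ with ht₂
  set s₁ := y₂⁻¹ with hs₁
  set s₂ := y₁⁻¹ with hs₂
  have ht12 : t₁ < t₂ := pompeiu_aux_inv_lt hx₁0 hx₂0 hxpos hx12
  have hs12 : s₁ < s₂ := pompeiu_aux_inv_lt hy₁0 hy₂0 hypos hy12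
  -- membership transfer
  have hIccx : ∀ t ∈ Set.Icc t₁ t₂, t ≠ 0 ∧ t⁻¹ ∈ Set.Ioo a b := by
    intro t ht
    obtain ⟨h1, h2⟩ := pompeiu_aux_inv_mem_Icc hx₁0 hx₂0 hxpos ht
    exact ⟨h1, ⟨lt_of_lt_of_le hx₁.1 h2.1, lt_of_le_of_lt h2.2 hx₂.2⟩⟩
  have hIccy : ∀ s ∈ Set.Icc s₁ s₂, s ≠ 0 ∧ s⁻¹ ∈ Set.Ioo c d := by
    intro s hs
    obtain ⟨h1, h2⟩ := pompeiu_aux_inv_mem_Icc hy₁0 hy₂0 hypos hs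
    exact ⟨h1, ⟨lt_of_lt_of_le hy₁.1 h2.1, lt_of_le_of_lt h2.2 hy₂.2⟩⟩
  -- g and its partial derivative in t
  set g : ℝ → ℝ → ℝ := fun t s => t * s * f t⁻¹ s⁻¹ with hg
  set g1 : ℝ → ℝ → ℝ := fun t s => s * f t⁻¹ s⁻¹ - s * t⁻¹ * fx t⁻¹ s⁻¹ with hg1
  have hderivg : ∀ t ∈ Set.Icc t₁ t₂, ∀ s ∈ Set.Icc s₁ s₂,
      HasDerivAt (fun t => g t s) (g1 t s) t := by
    intro t ht s hs
    obtain ⟨ht0, htab⟩ := hIccx t ht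
    obtain ⟨hs0, hscd⟩ := hIccy s hs
    have hinv : HasDerivAt (fun t : ℝ => t⁻¹) (-(t ^ 2)⁻¹) t := hasDerivAt_inv ht0
    have hf1 : HasDerivAt (fun t : ℝ => f t⁻¹ s⁻¹) (fx t⁻¹ s⁻¹ * -(t ^ 2)⁻¹) t :=
      (hfx _ htab _ (Set.mem_Icc_of_Ioo hscd)).comp t hinv
    have := ((hasDerivAt_id t).mul_const s).fun_mul hf1
    refine this.congr_deriv ?_
    simp only [hg1, id]
    field_simp
    ring
  -- mixed derivative
  set g2 : ℝ → ℝ → ℝ := fun t s =>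
    f t⁻¹ s⁻¹ - s⁻¹ * fy t⁻¹ s⁻¹ - t⁻¹ * fx t⁻¹ s⁻¹ + t⁻¹ * s⁻¹ * fxy t⁻¹ s⁻¹ with hg2
  have hderivg1 : ∀ t ∈ Set.Icc t₁ t₂, ∀ s ∈ Set.Icc s₁ s₂,
      HasDerivAt (fun s => g1 t s) (g2 t s) s := by
    intro t ht s hs
    obtain ⟨ht0, htab⟩ := hIccx t ht
    obtain ⟨hs0, hscd⟩ := hIccy s hs
    have hinv : HasDerivAt (fun s : ℝ => s⁻¹) (-(s ^ 2)⁻¹) s := hasDerivAt_inv hs0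
    have hf1 : HasDerivAt (fun s : ℝ => f t⁻¹ s⁻¹) (fy t⁻¹ s⁻¹ * -(s ^ 2)⁻¹) s :=
      (hfy _ htab _ hscd).comp s hinv
    have hf2 : HasDerivAt (fun s : ℝ => fx t⁻¹ s⁻¹) (fxy t⁻¹ s⁻¹ * -(s ^ 2)⁻¹) s :=
      (hfxy _ htab _ hscd).comp s hinv
    have h1 := (hasDerivAt_id s).fun_mul hf1
    have h2 := ((hasDerivAt_id s).mul_const (t⁻¹ : ℝ)).fun_mul hf2
    have := h1.fun_sub h2
    refine this.congr_deriv ?_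
    simp only [hg2, id]
    field_simp
    ring
  -- first MVT, in t
  set H : ℝ → ℝ := fun t => g t s₂ - g t s₁ with hH
  have hs₁m : s₁ ∈ Set.Icc s₁ s₂ := Set.left_mem_Icc.mpr (le_of_lt hs12)
  have hs₂m : s₂ ∈ Set.Icc s₁ s₂ := Set.right_mem_Icc.mpr (le_of_lt hs12)
  have hHd : ∀ t ∈ Set.Ioo t₁ t₂, HasDerivAt H (g1 t s₂ - g1 t s₁) t := by
    intro t ht
    exact (hderivg t (Set.mem_Icc_of_Ioo ht) s₂ hs₂m).sub
      (hderivg t (Set.mem_Icc_of_Ioo ht) s₁ hs₁m)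
  have hHc : ContinuousOn H (Set.Icc t₁ t₂) := by
    intro t ht
    exact (((hderivg t ht s₂ hs₂m).sub (hderivg t ht s₁ hs₁m)).continuousAt).continuousWithinAt
  obtain ⟨u, hu, hueq⟩ := exists_hasDerivAt_eq_slope H (fun t => g1 t s₂ - g1 t s₁)
    ht12 hHc hHd
  -- second MVT, in s
  have huIcc : u ∈ Set.Icc t₁ t₂ := Set.mem_Icc_of_Ioo hu
  have hGd : ∀ s ∈ Set.Ioo s₁ s₂, HasDerivAt (fun s => g1 u s) (g2 u s) s := by
    intro s hs
    exact hderivg1 u huIcc s (Set.mem_Icc_of_Ioo hs)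
  have hGc : ContinuousOn (fun s => g1 u s) (Set.Icc s₁ s₂) := by
    intro s hs
    exact ((hderivg1 u huIcc s hs).continuousAt).continuousWithinAt
  obtain ⟨v, hv, hveq⟩ := exists_hasDerivAt_eq_slope (fun s => g1 u s) (fun s => g2 u s)
    hs12 hGc hGd
  -- assemble
  obtain ⟨hu0, huinv⟩ := pompeiu_aux_inv_mem_Ioo hx₁0 hx₂0 hxpos hu
  obtain ⟨hv0, hvinv⟩ := pompeiu_aux_inv_mem_Ioo hy₁0 hy₂0 hypos hv
  refine ⟨u⁻¹, Set.mem_Icc_of_Ioo huinv, v⁻¹, Set.mem_Icc_of_Ioo hvinv, ?_⟩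
  have hLHS : u⁻¹ * v⁻¹ * fxy u⁻¹ v⁻¹ - u⁻¹ * fx u⁻¹ v⁻¹ - v⁻¹ * fy u⁻¹ v⁻¹ + f u⁻¹ v⁻¹
      = g2 u v := by simp only [hg2]; ring
  rw [hLHS, hveq, hueq]
  simp only [hH, hg, hs₁, hs₂, ht₁, ht₂, inv_inv]
  rw [div_div]
  rw [div_eq_div_iff]
  · field_simp
    ring
  · have h1 : (0:ℝ) < x₁⁻¹ - x₂⁻¹ := by linarith [ht12]
    have h2 : (0:ℝ) < y₁⁻¹ - y₂⁻¹ := by linarith [hs12]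
    positivity
  · have h1 : (0:ℝ) < x₂ - x₁ := by linarith
    have h2 : (0:ℝ) < y₂ - y₁ := by linarith
    positivity
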